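/- arXiv:1708.09826 — 3 statements merged into one kernel-verified Lean document; each statement's English description precedes it below -/
import Mathlib

section
/- Given real r₁ > 0 and e > 1 + r₁, with λ defined by formula (4), the quantity ρ₁ = (r₁ + e − λ)/(λ(r₁ + e) − 1) satisfies 0 < ρ₁ < 1/λ. -/
theorem stmt_7 (r₁ e : ℝ) (hr : 0 < r₁) (he : 1 + r₁ < e)
    (D lam ρ₁ : ℝ)
    (hD : D = Real.sqrt ((e ^ 2 - (1 + r₁) ^ 2) * (e ^ 2 - (1 - r₁) ^ 2)))
    (hlam : lam = (e ^ 2 + 1 - r₁ ^ 2 + D) / (2 * e))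
    (hρ : ρ₁ = (r₁ + e - lam) / (lam * (r₁ + e) - 1)) :
    0 < ρ₁ ∧ ρ₁ < 1 / lam := by
  have he0 : 0 < e := by linarith
  have hprod : 0 ≤ (e ^ 2 - (1 + r₁) ^ 2) * (e ^ 2 - (1 - r₁) ^ 2) := by
    have h1 : 0 ≤ e ^ 2 - (1 + r₁) ^ 2 := by nlinarith
    have h2 : 0 ≤ e ^ 2 - (1 - r₁) ^ 2 := by nlinarith
    positivity
  have hD0 : 0 ≤ D := hD ▸ Real.sqrt_nonneg _
  have hDsq : D ^ 2 = (e ^ 2 - (1 + r₁) ^ 2) * (e ^ 2 - (1 - r₁) ^ 2) := by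
    rw [hD, sq]; exact Real.mul_self_sqrt hprod
  have hlam1 : 1 < lam := by
    rw [hlam, lt_div_iff₀ (by positivity)]
    nlinarith
  have hlamlt : lam < r₁ + e := by
    have hR : 0 < 2*e*r₁ + e^2 + r₁^2 - 1 := by nlinarith
    have hDR : D < 2*e*r₁ + e^2 + r₁^2 - 1 := by
      nlinarith [hDsq, mul_nonneg hD0 hD0,
        mul_pos (mul_pos hr (by linarith : (0:ℝ) < r₁ + e)) (by nlinarith : (0:ℝ) < e^2 - 1 + e*r₁)]
    rw [hlam, div_lt_iff₀ (by positivity)]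
    nlinarith
  have hden : 0 < lam * (r₁ + e) - 1 := by nlinarith
  constructor
  · rw [hρ]
    exact div_pos (by linarith) hden
  · rw [hρ, div_lt_div_iff₀ hden (by linarith)]
    nlinarith
end

section
/- The hypotrochoid map F(w) = C(w + m/wⁿ) with C > 0, 0 ≤ m < 1/n², n ≥ 1, is injective on the domain |w| ≥ 1. -/
theorem stmt_11 (C m : ℝ) (hC : 0 < C) (n : ℕ) (hn : 1 ≤ n)
    (hm0 : 0 ≤ m) (hm1 : m < 1 / n ^ 2)
    (F : ℂ → ℂ) (hF : ∀ w, F w = (C : ℂ) * (w + (m : ℂ) * w ^ (-(n : ℤ))))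
    (w₁ w₂ : ℂ) (h1 : 1 ≤ ‖w₁‖) (h2 : 1 ≤ ‖w₂‖)
    (heq : F w₁ = F w₂) : w₁ = w₂ := by
  by_contra hne
  have hw1 : w₁ ≠ 0 := by
    intro h; rw [h] at h1; simp at h1; linarith
  have hw2 : w₂ ≠ 0 := by
    intro h; rw [h] at h2; simp at h2; linarith
  have hC' : (C : ℂ) ≠ 0 := by exact_mod_cast hC.ne'
  rw [hF, hF] at heq
  have key : w₁ + (m : ℂ) * w₁ ^ (-(n : ℤ)) = w₂ + (m : ℂ) * w₂ ^ (-(n : ℤ)) :=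
    mul_left_cancel₀ hC' heq
  rw [zpow_neg, zpow_natCast, zpow_neg, zpow_natCast] at key
  have hp1 : w₁ ^ n ≠ 0 := pow_ne_zero _ hw1
  have hp2 : w₂ ^ n ≠ 0 := pow_ne_zero _ hw2
  have e1 : (w₁ - w₂) * (w₁ ^ n * w₂ ^ n) = (m : ℂ) * (w₁ ^ n - w₂ ^ n) := by
    field_simp at key
    ring_nf
    ring_nf at key
    linear_combination key
  rw [← geom_sum₂_mul] at e1
  have e2 : w₁ ^ n * w₂ ^ n =
      (m : ℂ) * (∑ i ∈ Finset.range n, w₁ ^ i * w₂ ^ (n - 1 - i)) := by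
    have hsub : w₁ - w₂ ≠ 0 := sub_ne_zero.mpr hne
    have := e1
    field_simp at this ⊢
    apply mul_left_cancel₀ hsub
    linear_combination e1
  -- take absolute values
  have habs : ‖(w₁ ^ n * w₂ ^ n)‖ ≤
      m * (n * (‖w₁‖ ^ n * ‖w₂‖ ^ n)) := by
    rw [e2, norm_mul]
    have : ‖((m : ℂ))‖ = m := by
      rw [Complex.norm_real, Real.norm_eq_abs, abs_of_nonneg hm0]
    rw [this]
    gcongr
    calc ‖(∑ i ∈ Finset.range n, w₁ ^ i * w₂ ^ (n - 1 - i))‖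
        ≤ ∑ i ∈ Finset.range n, ‖(w₁ ^ i * w₂ ^ (n - 1 - i))‖ := by
          exact norm_sum_le _ _
      _ ≤ ∑ _i ∈ Finset.range n, ‖w₁‖ ^ n * ‖w₂‖ ^ n := by
          apply Finset.sum_le_sum
          intro i hi
          rw [norm_mul, norm_pow, norm_pow]
          have a1 : ‖w₁‖ ^ i ≤ ‖w₁‖ ^ n :=
            pow_le_pow_right₀ h1 (Finset.mem_range.mp hi).le
          have a2 : ‖w₂‖ ^ (n - 1 - i) ≤ ‖w₂‖ ^ n :=
            pow_le_pow_right₀ h2 (by omega)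
          exact mul_le_mul a1 a2 (by positivity) (by positivity)
      _ = n * (‖w₁‖ ^ n * ‖w₂‖ ^ n) := by
          rw [Finset.sum_const, Finset.card_range, nsmul_eq_mul]
  rw [norm_mul, norm_pow, norm_pow] at habs
  have hA : (1 : ℝ) ≤ ‖w₁‖ ^ n * ‖w₂‖ ^ n := by
    have b1 := one_le_pow₀ h1 (n := n)
    have b2 := one_le_pow₀ h2 (n := n)
    nlinarith
  have hmn : m * n < 1 := by
    have hn' : (1 : ℝ) ≤ n := by exact_mod_cast hn
    have hn0 : (0 : ℝ) < (n : ℝ) ^ 2 := by positivity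
    have h3 : m * (n : ℝ) ^ 2 < 1 := (lt_div_iff₀ hn0).mp hm1
    nlinarith
  nlinarith
end

section
/- The Schwarz–Christoffel series F(w) = C·Σ_{k=0}^∞ (−1)^k·binom(2/n, k)·w^{1−nk}/(1 − nk) satisfies F'(w) = C·(1 − w^{−n})^{2/n} for |w| > 1 (with the principal branch of the power). -/
noncomputable def genBinom (a : ℂ) (k : ℕ) : ℂ :=
  (∏ i ∈ Finset.range k, (a - i)) / (Nat.factorial k)

lemma norm_genBinom_le {a : ℂ} (ha : ‖a‖ ≤ 1) (k : ℕ) : ‖genBinom a k‖ ≤ 1 := by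
  have h : ‖∏ i ∈ Finset.range k, (a - (i:ℂ))‖ ≤ (Nat.factorial k : ℝ) := by
    induction k with
    | zero => simp
    | succ k ih =>
      rw [Finset.prod_range_succ, norm_mul, Nat.factorial_succ]
      have h2 : ‖(k:ℂ)‖ = (k:ℝ) := by simp
      have h1 : ‖a - (k:ℂ)‖ ≤ (k:ℝ) + 1 := by
        calc ‖a - (k:ℂ)‖ ≤ ‖a‖ + ‖(k:ℂ)‖ := norm_sub_le _ _
          _ ≤ (k:ℝ) + 1 := by rw [h2]; linarith
      calc ‖∏ i ∈ Finset.range k, (a - (i:ℂ))‖ * ‖a - (k:ℂ)‖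
          ≤ (Nat.factorial k : ℝ) * ((k:ℝ)+1) :=
            mul_le_mul ih h1 (norm_nonneg _) (by positivity)
        _ = (((k+1) * Nat.factorial k : ℕ) : ℝ) := by push_cast; ring
  have hk : (0:ℝ) < (Nat.factorial k : ℝ) := by positivity
  rw [genBinom, norm_div]
  have h2 : ‖((Nat.factorial k : ℕ) : ℂ)‖ = (Nat.factorial k : ℝ) := by simp
  rw [h2, div_le_one hk]
  exact h

lemma genBinom_succ (a : ℂ) (k : ℕ) :
    ((k:ℂ)+1) * genBinom a (k+1) = (a - k) * genBinom a k := by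
  have h1 : ((Nat.factorial k : ℕ) : ℂ) ≠ 0 :=
    Nat.cast_ne_zero.2 (Nat.factorial_ne_zero k)
  have h3 : (k:ℂ) + 1 ≠ 0 := Nat.cast_add_one_ne_zero k
  rw [genBinom, genBinom, Finset.prod_range_succ, Nat.factorial_succ]
  push_cast
  field_simp

lemma summable_mul_geometric {r : ℝ} (h0 : 0 ≤ r) (h1 : r < 1) :
    Summable (fun k : ℕ => (k:ℝ) * r ^ (k-1)) := by
  have hA : Summable (fun k : ℕ => (k:ℝ) * r ^ k) := by
    simpa using summable_pow_mul_geometric_of_norm_lt_one 1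
      (show ‖r‖ < 1 by rwa [Real.norm_of_nonneg h0])
  have hB : Summable (fun k : ℕ => r ^ k) := summable_geometric_of_lt_one h0 h1
  rw [← summable_nat_add_iff 1]
  refine (hA.add hB).congr fun k => ?_
  simp only [Nat.add_sub_cancel]
  push_cast
  ring

lemma summable_genBinom_pow {a : ℂ} (ha : ‖a‖ ≤ 1) {z : ℂ} (hz : ‖z‖ < 1) :
    Summable (fun k : ℕ => genBinom a k * z ^ k) := by
  refine Summable.of_norm_bounded (summable_geometric_of_lt_one (norm_nonneg z) hz)
    fun k => ?_
  rw [norm_mul, norm_pow]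
  calc ‖genBinom a k‖ * ‖z‖ ^ k ≤ 1 * ‖z‖ ^ k :=
        mul_le_mul_of_nonneg_right (norm_genBinom_le ha k) (by positivity)
    _ = ‖z‖ ^ k := one_mul _

lemma summable_genBinom_deriv {a : ℂ} (ha : ‖a‖ ≤ 1) {z : ℂ} (hz : ‖z‖ < 1) :
    Summable (fun k : ℕ => genBinom a k * ((k:ℂ) * z ^ (k-1))) := by
  refine Summable.of_norm_bounded (summable_mul_geometric (norm_nonneg z) hz) fun k => ?_
  rw [norm_mul, norm_mul, norm_pow]
  have h1 : ‖(k:ℂ)‖ = (k:ℝ) := by simp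
  rw [h1]
  calc ‖genBinom a k‖ * ((k:ℝ) * ‖z‖ ^ (k-1)) ≤ 1 * ((k:ℝ) * ‖z‖ ^ (k-1)) :=
        mul_le_mul_of_nonneg_right (norm_genBinom_le ha k) (by positivity)
    _ = (k:ℝ) * ‖z‖ ^ (k-1) := one_mul _

lemma tsum_genBinom_eq {a : ℂ} (ha : ‖a‖ ≤ 1) {y : ℂ} (hy : ‖y‖ < 1) :
    ∑' k : ℕ, genBinom a k * y ^ k = (1 + y) ^ a := by
  set h : ℂ → ℂ := fun z => ∑' k : ℕ, genBinom a k * z ^ k with hh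
  set D : ℂ → ℂ := fun z => ∑' k : ℕ, genBinom a k * ((k:ℂ) * z ^ (k-1)) with hDdef
  -- termwise differentiation
  have hder : ∀ z : ℂ, ‖z‖ < 1 → HasDerivAt h (D z) z := by
    intro z hz
    set ρ : ℝ := (1 + ‖z‖)/2 with hρ
    have hρ0 : 0 < ρ := by positivity
    have hρ1 : ρ < 1 := by rw [hρ]; linarith
    have hzρ : ‖z‖ < ρ := by rw [hρ]; linarith
    exact hasDerivAt_tsum_of_isPreconnected
      (u := fun k : ℕ => (k:ℝ) * ρ ^ (k-1))
      (summable_mul_geometric (le_of_lt hρ0) hρ1)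
      (Metric.isOpen_ball (x := (0:ℂ)) (ε := ρ))
      ((convex_ball (0:ℂ) ρ).isPreconnected)
      (fun k y _ => (hasDerivAt_pow k y).const_mul (genBinom a k))
      (fun k y hy' => by
        rw [norm_mul, norm_mul, norm_pow]
        have h1 : ‖(k:ℂ)‖ = (k:ℝ) := by simp
        rw [h1]
        have hy2 : ‖y‖ ≤ ρ := le_of_lt (mem_ball_zero_iff.1 hy')
        calc ‖genBinom a k‖ * ((k:ℝ) * ‖y‖ ^ (k-1))
            ≤ 1 * ((k:ℝ) * ρ ^ (k-1)) := by
              apply mul_le_mul (norm_genBinom_le ha k)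
              · exact mul_le_mul_of_nonneg_left
                  (pow_le_pow_left₀ (norm_nonneg y) hy2 _) (by positivity)
              · positivity
              · norm_num
          _ = (k:ℝ) * ρ ^ (k-1) := one_mul _)
      (Metric.mem_ball_self hρ0)
      (summable_genBinom_pow ha (by simpa using zero_lt_one))
      (mem_ball_zero_iff.2 hzρ)
  -- functional equation : (1+z) * D z = a * h z
  have hfun : ∀ z : ℂ, ‖z‖ < 1 → (1 + z) * D z = a * h z := by
    intro z hz
    have hS1 : Summable (fun k => genBinom a k * z ^ k) := summable_genBinom_pow ha hz
    have hS2 : Summable (fun k : ℕ => genBinom a k * ((k:ℂ) * z ^ (k-1))) :=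
      summable_genBinom_deriv ha hz
    have hS2' : Summable (fun k : ℕ => genBinom a (k+1) * (((k:ℂ)+1) * z ^ k)) := by
      refine ((summable_nat_add_iff 1).2 hS2).congr fun k => ?_
      simp only [Nat.add_sub_cancel]
      push_cast
      ring
    have hS3 : Summable (fun k : ℕ => genBinom a k * ((k:ℂ) * z ^ k)) := by
      refine (hS2.mul_left z).congr fun k => ?_
      cases k with
      | zero => simp
      | succ k =>
        simp only [Nat.add_sub_cancel, pow_succ]
        push_cast
        ring
    have hzD : z * D z = ∑' k : ℕ, genBinom a k * ((k:ℂ) * z ^ k) := by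
      simp only [hDdef]
      rw [← tsum_mul_left]
      refine tsum_congr fun k => ?_
      cases k with
      | zero => simp
      | succ k =>
        simp only [Nat.add_sub_cancel, pow_succ]
        push_cast
        ring
    have hDz : D z = ∑' k : ℕ, genBinom a (k+1) * (((k:ℂ)+1) * z ^ k) := by
      simp only [hDdef]
      rw [Summable.tsum_eq_zero_add hS2]
      simp only [Nat.cast_zero, zero_mul, mul_zero, zero_add, Nat.add_sub_cancel]
      refine tsum_congr fun k => ?_
      push_cast
      ring
    calc (1 + z) * D z = (∑' k : ℕ, genBinom a (k+1) * (((k:ℂ)+1) * z ^ k))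
            + ∑' k : ℕ, genBinom a k * ((k:ℂ) * z ^ k) := by
          rw [← hDz, ← hzD]; ring
      _ = ∑' k : ℕ, (genBinom a (k+1) * (((k:ℂ)+1) * z ^ k)
            + genBinom a k * ((k:ℂ) * z ^ k)) := (Summable.tsum_add hS2' hS3).symm
      _ = ∑' k : ℕ, a * (genBinom a k * z ^ k) := by
          refine tsum_congr fun k => ?_
          linear_combination (z ^ k) * genBinom_succ a k
      _ = a * h z := by rw [hh, tsum_mul_left]
  -- the auxiliary function h z * (1+z)^(-a) has zero derivative on the unit ball
  have hφ : ∀ z ∈ Metric.ball (0:ℂ) 1,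
      HasDerivAt (fun z => h z * (1+z) ^ (-a)) 0 z := by
    intro z hz
    rw [mem_ball_zero_iff] at hz
    have h1z0 : (1:ℂ) + z ≠ 0 := by
      intro hc
      have hz1 : z = -1 := by linear_combination hc
      rw [hz1] at hz
      simp at hz
    have h1z : (1:ℂ) + z ∈ Complex.slitPlane := by
      left
      have hre : |z.re| ≤ ‖z‖ := Complex.abs_re_le_norm z
      have : ((1:ℂ) + z).re = 1 + z.re := by simp
      rw [this]
      cases abs_le.1 hre with
      | intro h1 h2 => linarith
    have hc : HasDerivAt (fun z : ℂ => ((1:ℂ)+z) ^ (-a)) (-a * (1+z) ^ (-a-1) * 1) z :=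
      HasDerivAt.cpow_const ((hasDerivAt_id z).const_add 1) h1z
    have hm := (hder z hz).mul hc
    have e1 : (1+z) ^ (-a) = (1+z) ^ (-a-1) * (1+z) := by
      have e0 := Complex.cpow_add (-a-1) 1 h1z0
      rw [Complex.cpow_one, show -a-1+1 = -a from by ring] at e0
      exact e0
    have e2 := hfun z hz
    refine hm.congr_deriv ?_
    linear_combination (D z) * e1 + (((1:ℂ)+z) ^ (-a-1)) * e2
  -- constancy
  have hball : y ∈ Metric.ball (0:ℂ) 1 := mem_ball_zero_iff.2 hy
  have h0ball : (0:ℂ) ∈ Metric.ball (0:ℂ) 1 := Metric.mem_ball_self one_pos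
  have hconst : h y * (1+y) ^ (-a) = h 0 * (1+0) ^ (-a) := by
    refine (convex_ball (0:ℂ) 1).is_const_of_fderivWithin_eq_zero (𝕜 := ℂ)
      (f := fun z => h z * (1+z) ^ (-a)) (fun z hz => ((hφ z hz).differentiableAt).differentiableWithinAt)
      (fun z hz => ?_) hball h0ball
    rw [fderivWithin_of_isOpen Metric.isOpen_ball hz, (hφ z hz).hasFDerivAt.fderiv]
    ext x
    simp
  have hh0 : h 0 = 1 := by
    simp only [hh]
    rw [tsum_eq_single 0 (fun k hk => by simp [zero_pow hk])]
    simp [genBinom]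
  have h1y0 : (1:ℂ) + y ≠ 0 := by
    intro hc
    have hy1 : y = -1 := by linear_combination hc
    rw [hy1] at hy
    simp at hy
  have hne : (1+y) ^ a ≠ 0 := by
    intro hc
    rcases (Complex.cpow_eq_zero_iff _ _).1 hc with ⟨hc1, _⟩
    exact h1y0 hc1
  have : h y * (1+y) ^ (-a) = 1 := by
    rw [hconst, hh0]
    norm_num
  rw [Complex.cpow_neg] at this
  field_simp at this
  exact this

theorem stmt_18 (n : ℕ) (hn : 3 ≤ n) (C : ℝ) (hC : 0 < C)
    (F : ℂ → ℂ)
    (hF : ∀ w : ℂ, F w = (C : ℂ) * ∑' k : ℕ,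
      (-1) ^ k * genBinom (2 / n) k * w ^ (1 - (n : ℤ) * k) / (1 - (n : ℤ) * k))
    (w : ℂ) (hw : 1 < ‖w‖) :
    HasDerivAt F ((C : ℂ) * (1 - w ^ (-(n : ℤ))) ^ ((2 : ℂ) / n)) w := by
  have hw' : (1:ℝ) < ‖w‖ := hw
  have hw0 : w ≠ 0 := by
    intro h; rw [h] at hw'; simp at hw'; linarith
  have hnR : (3:ℝ) ≤ (n:ℝ) := by exact_mod_cast hn
  have ha : ‖(2 / (n:ℂ) : ℂ)‖ ≤ 1 := by
    rw [norm_div]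
    have h2 : ‖(2:ℂ)‖ = 2 := by simp
    have hn2 : ‖((n:ℕ):ℂ)‖ = (n:ℝ) := by simp
    rw [h2, hn2, div_le_one (by linarith)]
    linarith
  -- the integer 1 - n k is nonzero
  have hm0 : ∀ k : ℕ, (1 - (n:ℤ)*k) ≠ 0 := by
    intro k
    rcases Nat.eq_zero_or_pos k with hk | hk
    · simp [hk]
    · have h3 : (3:ℤ) ≤ (n:ℤ) * k := by
        calc (3:ℤ) ≤ (n:ℤ) := by exact_mod_cast hn
          _ = (n:ℤ) * 1 := (mul_one _).symm
          _ ≤ (n:ℤ) * k := by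
            apply mul_le_mul_of_nonneg_left (by exact_mod_cast hk) (by positivity)
      omega
  have hmC : ∀ k : ℕ, (1:ℂ) - (n:ℤ) * k ≠ 0 := by
    intro k
    have := hm0 k
    intro hc
    apply this
    have : ((1 - (n:ℤ)*k : ℤ) : ℂ) = 0 := by push_cast; linear_combination hc
    exact_mod_cast this
  have hmnorm : ∀ k : ℕ, (1:ℝ) ≤ ‖(1:ℂ) - (n:ℤ) * k‖ := by
    intro k
    have h1 : ((1 - (n:ℤ)*k : ℤ) : ℂ) = (1:ℂ) - (n:ℤ) * k := by push_cast; ring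
    rw [← h1, Complex.norm_intCast]
    have := Int.one_le_abs (hm0 k)
    exact_mod_cast this
  set r : ℝ := (1 + ‖w‖)/2 with hrdef
  have hr1 : 1 < r := by rw [hrdef]; linarith
  have hrw : r < ‖w‖ := by rw [hrdef]; linarith
  have hr0 : 0 < r := by linarith
  set ε : ℝ := ‖w‖ - r with hεdef
  have hε : 0 < ε := by rw [hεdef]; linarith
  -- norm lower bound on the ball
  have hball : ∀ z : ℂ, z ∈ Metric.ball w ε → r < ‖z‖ := by
    intro z hz
    rw [Metric.mem_ball] at hz
    have : ‖w‖ - ‖z‖ ≤ dist z w := by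
      rw [dist_comm, dist_eq_norm]
      exact norm_sub_norm_le w z
    rw [hεdef] at hz
    linarith
  -- derivative of each term
  have hgk : ∀ (k : ℕ) (z : ℂ), z ∈ Metric.ball w ε →
      HasDerivAt (fun z : ℂ => (-1) ^ k * genBinom (2 / n) k * z ^ (1 - (n : ℤ) * k) / (1 - (n : ℤ) * k))
        ((-1) ^ k * genBinom (2 / n) k * z ^ (1 - (n : ℤ) * k - 1)) z := by
    intro k z hz
    have hz0 : z ≠ 0 := by
      intro h
      have := hball z hz
      rw [h] at this; simp at this; linarith
    have h1 := ((hasDerivAt_zpow (1 - (n:ℤ)*k) z (Or.inl hz0)).const_mul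
      ((-1:ℂ) ^ k * genBinom (2 / n) k)).div_const ((1:ℂ) - (n:ℤ) * k)
    refine h1.congr_deriv ?_
    have hmc := hmC k
    have hMD : ((1 - (n:ℤ)*k : ℤ) : ℂ) = (1:ℂ) - ((n:ℤ):ℂ) * k := by push_cast; ring
    rw [hMD, mul_div_assoc, mul_div_cancel_left₀ _ hmc]
  -- uniform bound on derivatives
  have hbound : ∀ (k : ℕ) (z : ℂ), z ∈ Metric.ball w ε →
      ‖(-1:ℂ) ^ k * genBinom (2 / n) k * z ^ (1 - (n : ℤ) * k - 1)‖ ≤ (r⁻¹) ^ k := by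
    intro k z hz
    have hzr : r < ‖z‖ := hball z hz
    have hexp : (1 - (n:ℤ)*k - 1) = -((n*k : ℕ) : ℤ) := by push_cast; ring
    rw [norm_mul, norm_mul, norm_pow, norm_neg, norm_one, one_pow, one_mul,
      hexp, zpow_neg, zpow_natCast, norm_inv, norm_pow]
    have h1 : r ^ k ≤ ‖z‖ ^ (n*k) := by
      calc r ^ k ≤ r ^ (n*k) := by
            apply pow_le_pow_right₀ (le_of_lt hr1)
            exact Nat.le_mul_of_pos_left k (by omega)
        _ ≤ ‖z‖ ^ (n*k) := pow_le_pow_left₀ (le_of_lt hr0) (le_of_lt hzr) _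
    have h2 : (‖z‖ ^ (n*k))⁻¹ ≤ (r ^ k)⁻¹ := by
      apply inv_anti₀ (by positivity) h1
    calc ‖genBinom (2 / n) k‖ * (‖z‖ ^ (n*k))⁻¹
        ≤ 1 * (r ^ k)⁻¹ := by
          apply mul_le_mul (norm_genBinom_le ha k) h2 (by positivity) (by norm_num)
      _ = (r⁻¹) ^ k := by rw [one_mul, inv_pow]
  -- summability at w
  have hsum : Summable (fun k : ℕ =>
      (-1:ℂ) ^ k * genBinom (2 / n) k * w ^ (1 - (n : ℤ) * k) / (1 - (n : ℤ) * k)) := by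
    have hg : Summable (fun k : ℕ => ‖w‖ * (‖w‖⁻¹) ^ k) := by
      apply Summable.mul_left
      exact summable_geometric_of_lt_one (by positivity)
        (inv_lt_one_of_one_lt₀ hw')
    refine Summable.of_norm_bounded hg fun k => ?_
    rw [norm_div, norm_mul, norm_mul, norm_pow, norm_neg, norm_one, one_pow, one_mul]
    have hexp : (1 - (n:ℤ)*k) = 1 + -((n*k : ℕ) : ℤ) := by push_cast; ring
    rw [hexp, zpow_add₀ hw0, zpow_one, norm_mul, zpow_neg, zpow_natCast, norm_inv, norm_pow]
    have hwk : ‖w‖ ^ k ≤ ‖w‖ ^ (n*k) := by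
      apply pow_le_pow_right₀ (le_of_lt hw')
      exact Nat.le_mul_of_pos_left k (by omega)
    have h2 : (‖w‖ ^ (n*k))⁻¹ ≤ (‖w‖ ^ k)⁻¹ := inv_anti₀ (by positivity) hwk
    have hden := hmnorm k
    calc ‖genBinom (2 / n) k‖ * (‖w‖ * (‖w‖ ^ (n*k))⁻¹) / ‖(1:ℂ) - (n:ℤ) * k‖
        ≤ ‖genBinom (2 / n) k‖ * (‖w‖ * (‖w‖ ^ (n*k))⁻¹) / 1 := by
          apply div_le_div_of_nonneg_left ?_ ?_ hden
          · positivity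
          · norm_num
      _ = ‖genBinom (2 / n) k‖ * (‖w‖ * (‖w‖ ^ (n*k))⁻¹) := by rw [div_one]
      _ ≤ 1 * (‖w‖ * (‖w‖ ^ k)⁻¹) := by
          apply mul_le_mul (norm_genBinom_le ha k) ?_ (by positivity) (by norm_num)
          exact mul_le_mul_of_nonneg_left h2 (by positivity)
      _ = ‖w‖ * (‖w‖⁻¹) ^ k := by rw [one_mul, inv_pow]
  -- termwise differentiation of the series
  have key : HasDerivAt (fun z : ℂ => ∑' k : ℕ,
      (-1) ^ k * genBinom (2 / n) k * z ^ (1 - (n : ℤ) * k) / (1 - (n : ℤ) * k))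
      (∑' k : ℕ, (-1:ℂ) ^ k * genBinom (2 / n) k * w ^ (1 - (n : ℤ) * k - 1)) w :=
    hasDerivAt_tsum_of_isPreconnected
      (summable_geometric_of_lt_one (by positivity) (inv_lt_one_of_one_lt₀ hr1))
      Metric.isOpen_ball ((convex_ball w ε).isPreconnected)
      hgk hbound (Metric.mem_ball_self hε) hsum (Metric.mem_ball_self hε)
  -- identify the sum of derivatives with the binomial power
  have hyn : ‖-(w ^ (-(n:ℤ)))‖ < 1 := by
    rw [norm_neg, norm_zpow, zpow_neg, zpow_natCast]
    apply inv_lt_one_of_one_lt₀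
    exact one_lt_pow₀ hw' (by omega)
  have hval : (∑' k : ℕ, (-1:ℂ) ^ k * genBinom (2 / n) k * w ^ (1 - (n : ℤ) * k - 1))
      = (1 - w ^ (-(n : ℤ))) ^ ((2 : ℂ) / n) := by
    have := tsum_genBinom_eq ha hyn
    rw [show (1:ℂ) + -(w ^ (-(n:ℤ))) = 1 - w ^ (-(n:ℤ)) from by ring] at this
    rw [← this]
    refine tsum_congr fun k => ?_
    have hzz : w ^ (1 - (n:ℤ)*k - 1) = (w ^ (-(n:ℤ))) ^ k := by
      rw [← zpow_natCast (w ^ (-(n:ℤ))) k, ← zpow_mul]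
      congr 1
      push_cast
      ring
    rw [hzz, neg_pow]
    ring
  rw [show F = fun w : ℂ => (C : ℂ) * ∑' k : ℕ,
      (-1) ^ k * genBinom (2 / n) k * w ^ (1 - (n : ℤ) * k) / (1 - (n : ℤ) * k) from funext hF]
  rw [← hval]
  exact key.const_mul (C:ℂ)
end
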